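/- Every coloring of the plane ℝ² with 3 colors contains two points at Euclidean distance 1 receiving the same color. -/

import Mathlib

noncomputable def Pt (a b : ℝ) : EuclideanSpace ℝ (Fin 2) := WithLp.toLp 2 ![a, b]

lemma dist_Pt (a b a' b' : ℝ) :
    dist (Pt a b) (Pt a' b') = Real.sqrt ((a - a')^2 + (b - b')^2) := by
  rw [EuclideanSpace.dist_eq]
  simp [Pt, Fin.sum_univ_two, Real.dist_eq, sq_abs]

lemma dist_Pt_one (a b a' b' : ℝ) (h : (a - a')^2 + (b - b')^2 = 1) :
    dist (Pt a b) (Pt a' b') = 1 := by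
  rw [dist_Pt, h, Real.sqrt_one]

lemma fin3 (a b c d : Fin 3) (h1 : a ≠ b) (h2 : a ≠ c) (h3 : b ≠ c)
    (h4 : d ≠ b) (h5 : d ≠ c) : a = d := by
  fin_cases a <;> fin_cases b <;> fin_cases c <;> fin_cases d <;> simp_all

/-- Every coloring of the plane ℝ² with 3 colors contains two points at Euclidean
distance 1 receiving the same color (the classical lower bound CNP ≥ 4). -/
theorem plane_three_coloring_monochromatic_unit_pair
    (c : EuclideanSpace ℝ (Fin 2) → Fin 3) :
    ∃ x y : EuclideanSpace ℝ (Fin 2), dist x y = 1 ∧ c x = c y := by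
  by_contra hcon
  push_neg at hcon
  have hs0 : (0:ℝ) < Real.sqrt 3 := Real.sqrt_pos.mpr (by norm_num)
  have hne : Real.sqrt 3 ≠ 0 := ne_of_gt hs0
  have hs2 : (Real.sqrt 3) ^ 2 = 3 := Real.sq_sqrt (by norm_num)
  set s : ℝ := Real.sqrt 3 with hsdef
  -- rhombus lemma: points at distance √3 (in Pt coordinates) have equal colors
  have rhomb : ∀ a b a' b' : ℝ, (a - a')^2 + (b - b')^2 = 3 →
      c (Pt a b) = c (Pt a' b') := by
    intro a b a' b' hd
    have hxz : dist (Pt a b) (Pt ((a + a')/2 - (b' - b)/(2*s)) ((b + b')/2 + (a' - a)/(2*s))) = 1 := by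
      apply dist_Pt_one; field_simp; nlinarith [hd, hs2]
    have hxw : dist (Pt a b) (Pt ((a + a')/2 + (b' - b)/(2*s)) ((b + b')/2 - (a' - a)/(2*s))) = 1 := by
      apply dist_Pt_one; field_simp; nlinarith [hd, hs2]
    have hyz : dist (Pt a' b') (Pt ((a + a')/2 - (b' - b)/(2*s)) ((b + b')/2 + (a' - a)/(2*s))) = 1 := by
      apply dist_Pt_one; field_simp; nlinarith [hd, hs2]
    have hyw : dist (Pt a' b') (Pt ((a + a')/2 + (b' - b)/(2*s)) ((b + b')/2 - (a' - a)/(2*s))) = 1 := by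
      apply dist_Pt_one; field_simp; nlinarith [hd, hs2]
    have hzw : dist (Pt ((a + a')/2 - (b' - b)/(2*s)) ((b + b')/2 + (a' - a)/(2*s)))
        (Pt ((a + a')/2 + (b' - b)/(2*s)) ((b + b')/2 - (a' - a)/(2*s))) = 1 := by
      apply dist_Pt_one; field_simp; nlinarith [hd, hs2]
    exact fin3 _ _ _ _ (hcon _ _ hxz) (hcon _ _ hxw) (hcon _ _ hzw)
      (hcon _ _ hyz) (hcon _ _ hyw)
  have h11 : (Real.sqrt 11) ^ 2 = 11 := Real.sq_sqrt (by norm_num)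
  have e1 : c (Pt 0 0) = c (Pt (Real.sqrt 11 / 2) (1/2)) := by
    apply rhomb; nlinarith [h11]
  have e2 : c (Pt 0 0) = c (Pt (Real.sqrt 11 / 2) (-(1/2))) := by
    apply rhomb; nlinarith [h11]
  exact hcon (Pt (Real.sqrt 11 / 2) (1/2)) (Pt (Real.sqrt 11 / 2) (-(1/2)))
    (dist_Pt_one _ _ _ _ (by norm_num)) (e1.symm.trans e2)
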